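/- Let L ≥ 1, d ≥ 0, n = L·2^d, and v : {0,…,n−1} → ℝ. Define the left rotate-and-sum iterates v_0 = v and v_i(p) = v_{i−1}(p) + v_{i−1}((p + 2^{i−1}·L) mod n) for 1 ≤ i ≤ d. Then for every position p ∈ {0,…,n−1}, v_d(p) = Σ_{j=0}^{2^d−1} v((p + j·L) mod n). In particular the summation operator over D = 2^d length-L blocks can be evaluated with exactly d = log₂ D rotations. -/

import Mathlib

/-- Left rotate-and-sum: for `n = L·2^d` and iterates
`v_0 = v`, `v_i(p) = v_{i-1}(p) + v_{i-1}((p + 2^{i-1}·L) mod n)`, the final iterate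
satisfies `v_d(p) = Σ_{j<2^d} v((p + j·L) mod n)` for all positions `p < n`. -/
theorem stmt_1 (L d : ℕ) (hL : 1 ≤ L) (n : ℕ) (hn : n = L * 2 ^ d)
    (v : ℕ → ℝ) (w : ℕ → ℕ → ℝ)
    (h0 : ∀ p, w 0 p = v p)
    (hstep : ∀ i, 1 ≤ i → i ≤ d → ∀ p,
      w i p = w (i - 1) p + w (i - 1) ((p + 2 ^ (i - 1) * L) % n)) :
    ∀ p < n, w d p = ∑ j ∈ Finset.range (2 ^ d), v ((p + j * L) % n) := by
  set F : ℕ → ℕ → ℝ := fun p j => if j = 0 then v p else v ((p + j * L) % n) with hF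
  have key : ∀ i, i ≤ d → ∀ p, w i p = ∑ j ∈ Finset.range (2 ^ i), F p j := by
    intro i
    induction i with
    | zero => intro _ p; simp [h0, hF]
    | succ k ih =>
      intro hk p
      have hstep' := hstep (k + 1) (Nat.le_add_left 1 k) hk p
      simp only [Nat.add_sub_cancel] at hstep'
      rw [hstep', ih (Nat.le_of_succ_le hk), ih (Nat.le_of_succ_le hk)]
      have hpow : 2 ^ (k + 1) = 2 ^ k + 2 ^ k := by ring
      rw [hpow, Finset.sum_range_add]
      congr 1
      apply Finset.sum_congr rfl
      intro j _
      rcases Nat.eq_zero_or_pos j with hj | hj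
      · subst hj
        simp [hF, (pow_pos (two_pos : (0:ℕ) < 2) k).ne']
      · have h1 : (2 ^ k + j : ℕ) ≠ 0 := by positivity
        simp only [hF, hj.ne', h1, if_neg, if_false]
        rw [Nat.mod_add_mod]
        congr 2
        ring
  intro p hp
  rw [key d le_rfl p]
  apply Finset.sum_congr rfl
  intro j _
  rcases Nat.eq_zero_or_pos j with hj | hj
  · subst hj; simp [hF, Nat.mod_eq_of_lt hp]
  · simp [hF, hj.ne']
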